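/- arXiv:1305.4905 — 2 statements merged into one kernel-verified Lean document; each statement's English description precedes it below -/
import Mathlib

section
/- Let q be a prime power and let D be a 2-minimal acyclic multicast network with subtree graph H. If D admits a rate-2 linear coding solution over the finite field F_q, then H has a proper coloring with q + 1 colors. -/
namespace NCMinor

variable {V A : Type}

/-- `IsArcWalk tl hd u v p` : the list of arcs `p` forms a directed walk from `u` to `v`
in the multigraph with tail map `tl` and head map `hd`. -/
def IsArcWalk (tl hd : A → V) : V → V → List A → Prop
  | u, v, [] => u = v
  | u, v, a :: p => tl a = u ∧ IsArcWalk tl hd (hd a) v p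

/-- `lam tl hd s v` : the maximum number of pairwise arc-disjoint directed paths
from `s` to `v`. -/
noncomputable def lam (tl hd : A → V) (s v : V) : ℕ :=
  sSup {k | ∃ P : Fin k → List A,
    (∀ i, IsArcWalk tl hd s v (P i)) ∧
    ∀ i j : Fin k, i ≠ j → ∀ a, a ∈ P i → a ∉ P j}

/-- in-degree -/
noncomputable def inDeg (hd : A → V) (v : V) : ℕ := {a | hd a = v}.ncard

/-- `cutVal tl hd U` : number of arcs entering the node set `U` from outside. -/
noncomputable def cutVal (tl hd : A → V) (U : Set V) : ℕ :=
  {a | tl a ∉ U ∧ hd a ∈ U}.ncard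

/-- `eta tl hd s u v` : minimum value of a cut separating `{u, v}` from `s`. -/
noncomputable def eta (tl hd : A → V) (s u v : V) : ℕ :=
  sInf {k | ∃ U : Set V, u ∈ U ∧ v ∈ U ∧ s ∉ U ∧ cutVal tl hd U = k}

def Acyclic (tl hd : A → V) : Prop := ∀ v p, IsArcWalk tl hd v v p → p = []

/-- deleting any arc decreases the max-flow to some node. -/
def LinkMinimal (tl hd : A → V) (s : V) : Prop :=
  ∀ a : A, ∃ v : V,
    lam (fun b : {b : A // b ≠ a} => tl b.1) (fun b => hd b.1) s v < lam tl hd s v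

/-- rate 2 is feasible to every receiver, but infeasible after deleting any arc. -/
def TwoMinimal (tl hd : A → V) (s : V) (T : Set V) : Prop :=
  (∀ t ∈ T, 2 ≤ lam tl hd s t) ∧
  ∀ a : A, ∃ t ∈ T,
    lam (fun b : {b : A // b ≠ a} => tl b.1) (fun b => hd b.1) s t < 2

/-- a rate-2 linear coding solution over the field `F`. -/
def IsCodingSolution (tl hd : A → V) (s : V) (T : Set V) {F : Type} [Field F]
    (φ : A → F × F) : Prop :=
  (∀ a, φ a ≠ 0) ∧
  (∀ a, tl a ≠ s → φ a ∈ Submodule.span F (φ '' {b | hd b = tl a})) ∧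
  (∀ t ∈ T, Submodule.span F (φ '' {b | hd b = t}) = ⊤)

/-- generating relation of the subtree decomposition: consecutive arcs through an
in-degree-1 node lie in the same class. -/
def SubtreeRel (tl hd : A → V) (a b : A) : Prop :=
  hd a = tl b ∧ inDeg hd (hd a) = 1

/-- the subtrees: classes of arcs generated by `SubtreeRel`. -/
def Subtrees (tl hd : A → V) : Type := Quot (SubtreeRel tl hd)

/-- the subtree graph: two subtrees are adjacent iff some node of in-degree 2 has one
incoming arc in each. -/
def subtreeGraph (tl hd : A → V) : SimpleGraph (Subtrees tl hd) where
  Adj x y := x ≠ y ∧ ∃ a b : A,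
    Quot.mk _ a = x ∧ Quot.mk _ b = y ∧ hd a = hd b ∧ inDeg hd (hd a) = 2
  symm := ⟨by
    rintro x y ⟨hxy, a, b, ha, hb, hab, hdeg⟩
    exact ⟨hxy.symm, b, a, hb, ha, hab.symm, hab ▸ hdeg⟩⟩
  loopless := ⟨by rintro x ⟨hxx, -⟩; exact hxx rfl⟩

/-- the underlying (undirected, simple) topology of the network. -/
def topology (tl hd : A → V) : SimpleGraph V where
  Adj u v := u ≠ v ∧ ∃ a, (tl a = u ∧ hd a = v) ∨ (tl a = v ∧ hd a = u)
  symm := ⟨by rintro u v ⟨huv, a, h⟩; exact ⟨huv.symm, a, h.symm⟩⟩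
  loopless := ⟨by rintro u ⟨h, -⟩; exact h rfl⟩

/-- graph minor via branch sets. -/
def IsMinor {W : Type} (M : SimpleGraph W) (G : SimpleGraph V) : Prop :=
  ∃ B : W → Set V,
    (∀ m, (G.induce (B m)).Connected) ∧
    (Pairwise fun m m' => Disjoint (B m) (B m')) ∧
    ∀ m m', M.Adj m m' → ∃ u ∈ B m, ∃ v ∈ B m', G.Adj u v

/-- `S` is the arc set of an `s`-rooted out-tree. -/
def IsOutTree (tl hd : A → V) (s : V) (S : Set A) : Prop :=
  (∀ a ∈ S, hd a ≠ s) ∧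
  Set.InjOn hd S ∧
  ∀ a ∈ S, ∃ p : List A, (∀ b ∈ p, b ∈ S) ∧ IsArcWalk tl hd s (tl a) p

/-- node `v` belongs to the out-tree with root `s` and arc set `S`. -/
def MemTree (tl hd : A → V) (s : V) (S : Set A) (v : V) : Prop :=
  v = s ∨ ∃ a ∈ S, hd a = v ∨ tl a = v

/-- tree decomposition of the graph `G` with host tree `H` and bags `B`. -/
structure IsTreeDecomp (G : SimpleGraph V) {X : Type} (H : SimpleGraph X)
    (B : X → Set V) : Prop where
  isTree : H.IsTree
  mem_bag : ∀ v, ∃ x, v ∈ B x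
  edge_bag : ∀ u v, G.Adj u v → ∃ x, u ∈ B x ∧ v ∈ B x
  bag_connected : ∀ v : V, (H.induce {x | v ∈ B x}).Connected

/-- size of a largest clique. -/
noncomputable def cliqueNumber {W : Type} (G : SimpleGraph W) : ℕ :=
  sSup {n | ∃ t : Finset W, G.IsNClique n t}

end NCMinor

namespace NCMinor

section Aux

variable {V A : Type}


section Walks

variable (tl hd : A → V)

theorem isArcWalk_append {u v w : V} {p q : List A} (h1 : IsArcWalk tl hd u v p)
    (h2 : IsArcWalk tl hd v w q) : IsArcWalk tl hd u w (p ++ q) := by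
  induction p generalizing u with
  | nil => obtain rfl : u = v := h1; exact h2
  | cons a p ih => obtain ⟨h, h'⟩ := h1; exact ⟨h, ih h'⟩

theorem isArcWalk_mem_split {u v : V} {p : List A} {a : A} (ha : a ∈ p)
    (h : IsArcWalk tl hd u v p) :
    ∃ p1 p2, p = p1 ++ a :: p2 ∧ IsArcWalk tl hd u (tl a) p1 ∧ IsArcWalk tl hd (hd a) v p2 := by
  induction p generalizing u with
  | nil => simp at ha
  | cons b p ih =>
    obtain ⟨hb, h'⟩ := h
    rcases List.mem_cons.mp ha with rfl | ha
    · exact ⟨[], p, rfl, hb.symm, h'⟩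
    · obtain ⟨p1, p2, rfl, h1, h2⟩ := ih ha h'
      exact ⟨b :: p1, p2, rfl, ⟨hb, h1⟩, h2⟩

theorem isArcWalk_last {v : V} : ∀ {p : List A} {u : V}, IsArcWalk tl hd u v p → p ≠ [] →
    ∃ e ∈ p, hd e = v := by
  intro p
  induction p with
  | nil => intro u _ h; exact absurd rfl h
  | cons a q ih =>
    intro u h _
    rcases q with _ | ⟨b, q'⟩
    · exact ⟨a, List.mem_cons_self, h.2⟩
    · obtain ⟨e, he, hev⟩ := ih h.2 (by simp)
      exact ⟨e, List.mem_cons_of_mem _ he, hev⟩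

theorem walk_tl_nodup (hacyc : Acyclic tl hd) :
    ∀ (p : List A) (u v : V), IsArcWalk tl hd u v p → (p.map tl).Nodup := by
  intro p
  induction p with
  | nil => simp
  | cons a p ih =>
    intro u v h
    obtain ⟨ha, h'⟩ := h
    simp only [List.map_cons, List.nodup_cons]
    refine ⟨?_, ih _ _ h'⟩
    intro hmem
    obtain ⟨b, hb, hba⟩ := List.mem_map.mp hmem
    obtain ⟨p1, p2, rfl, h1, h2⟩ := isArcWalk_mem_split tl hd hb h'
    have hw : IsArcWalk tl hd (tl a) (tl a) (a :: p1) := by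
      refine ⟨rfl, ?_⟩
      rwa [hba] at h1
    exact absurd (hacyc _ _ hw) (by simp)

theorem walk_length_le [Fintype V] (hacyc : Acyclic tl hd) {u v : V} {p : List A}
    (h : IsArcWalk tl hd u v p) : p.length ≤ Fintype.card V := by
  have h1 := walk_tl_nodup tl hd hacyc p u v h
  have := h1.length_le_card
  simpa using this

end Walks

section HT

variable (tl hd : A → V)

noncomputable def ht (v : V) : ℕ :=
  sSup {n | ∃ (u : V) (p : List A), p.length = n ∧ IsArcWalk tl hd u v p}

variable [Fintype V]

theorem htSet_bdd (hacyc : Acyclic tl hd) (v : V) :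
    BddAbove {n | ∃ (u : V) (p : List A), p.length = n ∧ IsArcWalk tl hd u v p} := by
  refine ⟨Fintype.card V, ?_⟩
  rintro n ⟨u, p, rfl, hw⟩
  exact walk_length_le tl hd hacyc hw

theorem ht_spec (hacyc : Acyclic tl hd) (v : V) :
    ∃ (u : V) (p : List A), p.length = ht tl hd v ∧ IsArcWalk tl hd u v p := by
  have hne : Set.Nonempty {n | ∃ (u : V) (p : List A), p.length = n ∧ IsArcWalk tl hd u v p} :=
    ⟨0, v, [], rfl, rfl⟩
  exact Nat.sSup_mem hne (htSet_bdd tl hd hacyc v)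

theorem le_ht (hacyc : Acyclic tl hd) {v : V} {n : ℕ} (h : ∃ (u : V) (p : List A), p.length = n ∧ IsArcWalk tl hd u v p) :
    n ≤ ht tl hd v :=
  le_csSup (htSet_bdd tl hd hacyc v) h

theorem ht_arc_lt (hacyc : Acyclic tl hd) (e : A) : ht tl hd (tl e) < ht tl hd (hd e) := by
  obtain ⟨u, p, hlen, hw⟩ := ht_spec tl hd hacyc (tl e)
  have hw2 : IsArcWalk tl hd u (hd e) (p ++ [e]) :=
    isArcWalk_append tl hd hw ⟨rfl, rfl⟩
  have h2 : p.length + 1 ≤ ht tl hd (hd e) := le_ht tl hd hacyc ⟨u, p ++ [e], by simp, hw2⟩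
  omega

theorem ht_le_of_walk (hacyc : Acyclic tl hd) {v w : V} {p : List A} (hw : IsArcWalk tl hd v w p) :
    ht tl hd v ≤ ht tl hd w := by
  obtain ⟨u, p0, hlen, h0⟩ := ht_spec tl hd hacyc v
  have h2 : p0.length + p.length ≤ ht tl hd w :=
    le_ht tl hd hacyc ⟨u, p0 ++ p, by simp, isArcWalk_append tl hd h0 hw⟩
  omega

theorem ht_of_mem_walk (hacyc : Acyclic tl hd) {u w : V} {p : List A} {e : A} (he : e ∈ p)
    (hw : IsArcWalk tl hd u w p) : ht tl hd (hd e) ≤ ht tl hd w := by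
  obtain ⟨p1, p2, rfl, h1, h2⟩ := isArcWalk_mem_split tl hd he hw
  exact ht_le_of_walk tl hd hacyc h2

theorem ht_source_eq_zero (hacyc : Acyclic tl hd) {s : V} (hs : ∀ e : A, hd e ≠ s) : ht tl hd s = 0 := by
  obtain ⟨u, p, hlen, hw⟩ := ht_spec tl hd hacyc s
  rcases p with _ | ⟨a, q⟩
  · simpa using hlen.symm
  · obtain ⟨e, _, hev⟩ := isArcWalk_last tl hd hw (by simp)
    exact absurd hev (hs e)

end HT

section LinAlg

variable {F : Type} [Field F]

theorem span_pair_ne_top (x : F × F) : Submodule.span F {x} ≠ ⊤ := by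
  intro h
  have h1 : ((1 : F), (0 : F)) ∈ Submodule.span F {x} := h ▸ Submodule.mem_top
  have h2 : ((0 : F), (1 : F)) ∈ Submodule.span F {x} := h ▸ Submodule.mem_top
  obtain ⟨a, ha⟩ := Submodule.mem_span_singleton.mp h1
  obtain ⟨b, hb⟩ := Submodule.mem_span_singleton.mp h2
  have ha1 : a * x.1 = 1 := congrArg Prod.fst ha
  have ha2 : a * x.2 = 0 := congrArg Prod.snd ha
  have hb2 : b * x.2 = 1 := congrArg Prod.snd hb
  have hane : a ≠ 0 := fun h0 => by simp [h0] at ha1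
  have hx2 : x.2 = 0 := by
    rcases mul_eq_zero.mp ha2 with h0 | h0
    · exact absurd h0 hane
    · exact h0
  rw [hx2, mul_zero] at hb2
  exact zero_ne_one hb2

theorem indep_symm {M : Type} [AddCommGroup M] [Module F M] {x y : M} (hy : y ≠ 0)
    (h : x ∉ Submodule.span F {y}) : y ∉ Submodule.span F {x} := by
  intro hmem
  obtain ⟨c, hc⟩ := Submodule.mem_span_singleton.mp hmem
  have hc0 : c ≠ 0 := fun h0 => hy (by rw [← hc, h0, zero_smul])
  apply h
  rw [Submodule.mem_span_singleton]
  exact ⟨c⁻¹, by rw [← hc, smul_smul, inv_mul_cancel₀ hc0, one_smul]⟩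

open Classical in
noncomputable def slope (x : F × F) : Option F :=
  if x.1 = 0 then none else some (x.2 / x.1)

theorem slope_smul {k : F} (hk : k ≠ 0) (x : F × F) : slope (k • x) = slope x := by
  classical
  have h1 : (k • x).1 = k * x.1 := rfl
  have h2 : (k • x).2 = k * x.2 := rfl
  by_cases hx : x.1 = 0
  · simp [slope, h1, hx]
  · have : k * x.1 ≠ 0 := mul_ne_zero hk hx
    simp only [slope, h1, h2, hx, this, if_false]
    rw [mul_div_mul_left _ _ hk]

theorem parallel_of_slope_eq {x y : F × F} (hx : x ≠ 0) (hy : y ≠ 0)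
    (h : slope x = slope y) : ∃ k : F, k ≠ 0 ∧ x = k • y := by
  classical
  by_cases hy1 : y.1 = 0
  · have hx1 : x.1 = 0 := by
      by_contra hx1
      simp [slope, hx1, hy1] at h
    have hy2 : y.2 ≠ 0 := by
      intro h2; exact hy (Prod.ext hy1 h2)
    have hx2 : x.2 ≠ 0 := by
      intro h2; exact hx (Prod.ext hx1 h2)
    refine ⟨x.2 / y.2, div_ne_zero hx2 hy2, ?_⟩
    apply Prod.ext
    · show x.1 = x.2 / y.2 * y.1
      rw [hx1, hy1, mul_zero]
    · show x.2 = x.2 / y.2 * y.2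
      rw [div_mul_cancel₀ _ hy2]
  · have hx1 : x.1 ≠ 0 := by
      intro hx1
      simp [slope, hx1, hy1] at h
    have heq : x.2 / x.1 = y.2 / y.1 := by
      simpa [slope, hx1, hy1] using h
    refine ⟨x.1 / y.1, div_ne_zero hx1 hy1, ?_⟩
    apply Prod.ext
    · show x.1 = x.1 / y.1 * y.1
      rw [div_mul_cancel₀ _ hy1]
    · show x.2 = x.1 / y.1 * y.2
      field_simp at heq ⊢
      linear_combination heq

theorem exists_indep_pair {B : Type} {ψ : B → F × F} {S : Set B}
    (h : Submodule.span F (ψ '' S) = ⊤) :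
    ∃ f ∈ S, ∃ g ∈ S, ψ f ∉ Submodule.span F {ψ g} := by
  by_contra hcon
  push_neg at hcon
  rcases Set.eq_empty_or_nonempty S with rfl | ⟨g, hg⟩
  · rw [Set.image_empty, Submodule.span_empty] at h
    have : ((1 : F), (0 : F)) ∈ (⊥ : Submodule F (F × F)) := h ▸ Submodule.mem_top
    have := (Submodule.mem_bot F).mp this
    simp [Prod.ext_iff] at this
  · have hle : Submodule.span F (ψ '' S) ≤ Submodule.span F {ψ g} := by
      rw [Submodule.span_le]
      rintro x ⟨b, hb, rfl⟩
      exact hcon b hb g hg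
    rw [h, top_le_iff] at hle
    exact span_pair_ne_top (ψ g) hle

end LinAlg

section Lam

variable (tl hd : A → V)

theorem bddAbove_lamSet [Finite A] {s t : V} (hst : s ≠ t) :
    BddAbove {k | ∃ P : Fin k → List A,
      (∀ i, IsArcWalk tl hd s t (P i)) ∧
      ∀ i j : Fin k, i ≠ j → ∀ a, a ∈ P i → a ∉ P j} := by
  haveI := Fintype.ofFinite A
  refine ⟨Fintype.card A, ?_⟩
  rintro k ⟨P, hw, hdisj⟩
  have hne : ∀ i, P i ≠ [] := by
    intro i h
    have := hw i
    rw [h] at this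
    exact hst this
  have hinj : Function.Injective (fun i : Fin k => (P i).head (hne i)) := by
    intro i j hij
    by_contra hne'
    have hij' : (P i).head (hne i) = (P j).head (hne j) := hij
    have hmem : (P i).head (hne i) ∈ P j := by
      rw [hij']; exact List.head_mem _
    exact hdisj i j hne' _ (List.head_mem _) hmem
  simpa using Fintype.card_le_of_injective _ hinj

theorem two_le_lam [Finite A] {s t : V} (hst : s ≠ t) (P1 P2 : List A)
    (h1 : IsArcWalk tl hd s t P1) (h2 : IsArcWalk tl hd s t P2)
    (hdisj : ∀ a ∈ P1, a ∉ P2) : 2 ≤ lam tl hd s t := by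
  apply le_csSup (bddAbove_lamSet tl hd hst)
  refine ⟨![P1, P2], ?_, ?_⟩
  · intro i; fin_cases i <;> simpa
  · intro i j hij a hai haj
    fin_cases i <;> fin_cases j
    · exact hij rfl
    · simp only [Matrix.cons_val_zero] at hai
      simp only [Matrix.cons_val_one, Matrix.head_cons] at haj
      exact hdisj a hai haj
    · simp only [Matrix.cons_val_one, Matrix.head_cons] at hai
      simp only [Matrix.cons_val_zero] at haj
      exact hdisj a haj hai
    · exact hij rfl

theorem walks_of_two_le_lam [Finite A] {s t : V} (hst : s ≠ t) (h : 2 ≤ lam tl hd s t) :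
    ∃ P1 P2 : List A, IsArcWalk tl hd s t P1 ∧ IsArcWalk tl hd s t P2 ∧
      ∀ a ∈ P1, a ∉ P2 := by
  set S := {k | ∃ P : Fin k → List A,
      (∀ i, IsArcWalk tl hd s t (P i)) ∧
      ∀ i j : Fin k, i ≠ j → ∀ a, a ∈ P i → a ∉ P j} with hS
  have hbdd := bddAbove_lamSet tl hd (A := A) hst
  have hne : S.Nonempty := by
    by_contra h'
    rw [Set.not_nonempty_iff_eq_empty] at h'
    have : lam tl hd s t = 0 := by
      rw [lam, ← hS, h', csSup_empty]
      rfl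
    omega
  have hmem : lam tl hd s t ∈ S := Nat.sSup_mem hne hbdd
  have hk : 2 ≤ lam tl hd s t := h
  obtain ⟨P, hw, hdisj⟩ := hmem
  refine ⟨P ⟨0, by omega⟩, P ⟨1, by omega⟩, hw _, hw _, ?_⟩
  intro a ha
  exact hdisj _ _ (by simp [Fin.ext_iff]) a ha

theorem isArcWalk_val {b0 : A} {u v : V} {p : List {c : A // c ≠ b0}}
    (h : IsArcWalk (fun c : {c : A // c ≠ b0} => tl c.1) (fun c => hd c.1) u v p) :
    IsArcWalk tl hd u v (p.map Subtype.val) := by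
  induction p generalizing u with
  | nil => exact h
  | cons a p ih => exact ⟨h.1, ih h.2⟩

theorem isArcWalk_restrict {b0 : A} {u v : V} {p : List A} (h : IsArcWalk tl hd u v p)
    (hp : ∀ c ∈ p, c ≠ b0) :
    ∃ p' : List {c : A // c ≠ b0},
      IsArcWalk (fun c : {c : A // c ≠ b0} => tl c.1) (fun c => hd c.1) u v p' ∧
      ∀ e : {c : A // c ≠ b0}, e ∈ p' ↔ e.1 ∈ p := by
  induction p generalizing u with
  | nil => exact ⟨[], h, by simp⟩
  | cons a p ih =>
    obtain ⟨p', h1, h2⟩ := ih h.2 (fun c hc => hp c (List.mem_cons_of_mem _ hc))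
    refine ⟨⟨a, hp a List.mem_cons_self⟩ :: p', ⟨h.1, h1⟩, ?_⟩
    intro e
    simp [h2 e, Subtype.ext_iff]

theorem acyclic_restrict {b0 : A} (hacyc : Acyclic tl hd) :
    Acyclic (fun c : {c : A // c ≠ b0} => tl c.1) (fun c => hd c.1) := by
  intro v p hw
  have := hacyc v _ (isArcWalk_val tl hd hw)
  exact List.map_eq_nil_iff.mp this

theorem no_arc_into_source [Fintype V] [Finite A] {s : V} {T : Set V}
    (hacyc : Acyclic tl hd) (hmin : TwoMinimal tl hd s T) (hsT : s ∉ T) :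
    ∀ e : A, hd e ≠ s := by
  intro e0 he0
  obtain ⟨t, htT, hlt⟩ := hmin.2 e0
  have hst : s ≠ t := fun h => hsT (h ▸ htT)
  obtain ⟨P1, P2, h1, h2, hdisj⟩ := walks_of_two_le_lam tl hd hst (hmin.1 t htT)
  have havoid : ∀ p : List A, IsArcWalk tl hd s t p → ∀ c ∈ p, c ≠ e0 := by
    intro p hp c hc hce
    subst hce
    obtain ⟨p1, p2, rfl, hw1, hw2⟩ := isArcWalk_mem_split tl hd hc hp
    have hw : IsArcWalk tl hd s s (p1 ++ [c]) :=
      isArcWalk_append tl hd hw1 ⟨rfl, he0⟩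
    have := hacyc s _ hw
    simp at this
  obtain ⟨P1', hw1', hm1⟩ := isArcWalk_restrict tl hd h1 (havoid P1 h1)
  obtain ⟨P2', hw2', hm2⟩ := isArcWalk_restrict tl hd h2 (havoid P2 h2)
  have h2le : 2 ≤ lam (fun c : {c : A // c ≠ e0} => tl c.1) (fun c => hd c.1) s t := by
    apply two_le_lam _ _ hst P1' P2' hw1' hw2'
    intro a ha hmem
    exact hdisj a.1 ((hm1 a).mp ha) ((hm2 a).mp hmem)
  omega

end Lam

section Build

variable (tl hd : A → V)

theorem build_disjoint_walks [Fintype V] {F : Type} [Field F]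
    (hacyc : Acyclic tl hd) {s : V} (hs : ∀ e : A, hd e ≠ s)
    (φ : A → F × F) (hφ1 : ∀ a, φ a ≠ 0)
    (hφ2 : ∀ a, tl a ≠ s → φ a ∈ Submodule.span F (φ '' {b | hd b = tl a})) :
    ∀ (n : ℕ) (f g : A), ht tl hd (tl f) + ht tl hd (tl g) ≤ n →
      φ f ∉ Submodule.span F {φ g} →
      ∃ Pf Pg : List A, IsArcWalk tl hd s (tl f) Pf ∧ IsArcWalk tl hd s (tl g) Pg ∧
        ∀ e ∈ Pf ++ [f], e ∉ Pg ++ [g] := by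
  intro n
  induction n using Nat.strong_induction_on with
  | _ n IH =>
  intro f g hsum hindep
  have hfg : f ≠ g := fun h => hindep (h ▸ Submodule.mem_span_singleton_self _)
  have hpick : ∀ f' : A, tl f' ≠ s → φ f' ∉ Submodule.span F {φ g} →
      True := fun _ _ _ => trivial
  -- helper : find an in-arc whose vector avoids a given line
  have pick : ∀ (c d : A), tl c ≠ s → φ c ∉ Submodule.span F {φ d} →
      ∃ c' : A, hd c' = tl c ∧ φ c' ∉ Submodule.span F {φ d} := by
    intro c d hcs hcd
    by_contra h'
    push_neg at h'
    have hle : Submodule.span F (φ '' {b | hd b = tl c}) ≤ Submodule.span F {φ d} := by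
      rw [Submodule.span_le]
      rintro x ⟨b, hb, rfl⟩
      exact h' b hb
    exact hcd (hle (hφ2 c hcs))
  by_cases hfs : tl f = s
  · by_cases hgs : tl g = s
    · refine ⟨[], [], hfs.symm, hgs.symm, ?_⟩
      intro e he hmem
      simp only [List.nil_append, List.mem_singleton] at he hmem
      exact hfg (he ▸ hmem ▸ rfl)
    · -- extend g
      have hindep' : φ g ∉ Submodule.span F {φ f} := indep_symm (hφ1 g) hindep
      obtain ⟨g', hg'hd, hg'⟩ := pick g f hgs hindep'
      have hindep'' : φ f ∉ Submodule.span F {φ g'} := indep_symm (hφ1 f) hg'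
      have hlt : ht tl hd (tl g') < ht tl hd (tl g) := by
        have := ht_arc_lt tl hd hacyc g'
        rwa [hg'hd] at this
      obtain ⟨Pf, Pg', w1, w2, hdisj⟩ :=
        IH (ht tl hd (tl f) + ht tl hd (tl g')) (by omega) f g' le_rfl hindep''
      refine ⟨Pf, Pg' ++ [g'], w1, isArcWalk_append tl hd w2 ⟨rfl, hg'hd⟩, ?_⟩
      intro e he hmem
      rcases List.mem_append.mp hmem with hmem | hmem
      · exact hdisj e he hmem
      · have heg : e = g := by simpa using hmem
        rw [heg] at he
        rcases List.mem_append.mp he with he | he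
        · have h1 : ht tl hd (hd g) ≤ ht tl hd (tl f) := ht_of_mem_walk tl hd hacyc he w1
          have h2 : ht tl hd (tl g) < ht tl hd (hd g) := ht_arc_lt tl hd hacyc g
          have h3 : ht tl hd (tl f) = 0 := by rw [hfs]; exact ht_source_eq_zero tl hd hacyc hs
          omega
        · have : g = f := by simpa using he
          exact hfg this.symm
  · by_cases hcmp : ht tl hd (tl g) ≤ ht tl hd (tl f)
    · -- extend f
      obtain ⟨f', hf'hd, hf'⟩ := pick f g hfs hindep
      have hlt : ht tl hd (tl f') < ht tl hd (tl f) := by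
        have := ht_arc_lt tl hd hacyc f'
        rwa [hf'hd] at this
      obtain ⟨Pf', Pg, w1, w2, hdisj⟩ :=
        IH (ht tl hd (tl f') + ht tl hd (tl g)) (by omega) f' g le_rfl hf'
      refine ⟨Pf' ++ [f'], Pg, isArcWalk_append tl hd w1 ⟨rfl, hf'hd⟩, w2, ?_⟩
      intro e he hmem
      rcases List.mem_append.mp he with he | he
      · exact hdisj e he hmem
      · have hef : e = f := by simpa using he
        rw [hef] at hmem
        rcases List.mem_append.mp hmem with hmem | hmem
        · have h1 : ht tl hd (hd f) ≤ ht tl hd (tl g) := ht_of_mem_walk tl hd hacyc hmem w2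
          have h2 : ht tl hd (tl f) < ht tl hd (hd f) := ht_arc_lt tl hd hacyc f
          omega
        · exact hfg (by simpa using hmem)
    · -- extend g
      push_neg at hcmp
      have hgs : tl g ≠ s := by
        intro h
        rw [h, ht_source_eq_zero tl hd hacyc hs] at hcmp
        omega
      have hindep' : φ g ∉ Submodule.span F {φ f} := indep_symm (hφ1 g) hindep
      obtain ⟨g', hg'hd, hg'⟩ := pick g f hgs hindep'
      have hindep'' : φ f ∉ Submodule.span F {φ g'} := indep_symm (hφ1 f) hg'
      have hlt : ht tl hd (tl g') < ht tl hd (tl g) := by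
        have := ht_arc_lt tl hd hacyc g'
        rwa [hg'hd] at this
      obtain ⟨Pf, Pg', w1, w2, hdisj⟩ :=
        IH (ht tl hd (tl f) + ht tl hd (tl g')) (by omega) f g' le_rfl hindep''
      refine ⟨Pf, Pg' ++ [g'], w1, isArcWalk_append tl hd w2 ⟨rfl, hg'hd⟩, ?_⟩
      intro e he hmem
      rcases List.mem_append.mp hmem with hmem | hmem
      · exact hdisj e he hmem
      · have heg : e = g := by simpa using hmem
        rw [heg] at he
        rcases List.mem_append.mp he with he | he
        · have h1 : ht tl hd (hd g) ≤ ht tl hd (tl f) := ht_of_mem_walk tl hd hacyc he w1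
          have h2 : ht tl hd (tl g) < ht tl hd (hd g) := ht_arc_lt tl hd hacyc g
          omega
        · have : g = f := by simpa using he
          exact hfg this.symm
end Build


end Aux



/-- Lemma 1: if a 2-minimal acyclic multicast network has a rate-2
linear coding solution over a field of size `q`, then its subtree graph is properly
`(q+1)`-colorable. -/

theorem subtreeGraph_colorable_of_codingSolution
    {V A : Type} [Fintype V] [Fintype A] (tl hd : A → V) (s : V) (T : Set V)
    (hsT : s ∉ T) (hacyc : Acyclic tl hd) (hmin : TwoMinimal tl hd s T)
    (q : ℕ) (F : Type) [Field F] [Fintype F] (hF : Fintype.card F = q)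
    (φ : A → F × F) (hφ : IsCodingSolution tl hd s T φ) :
    (subtreeGraph tl hd).Colorable (q + 1) := by
  classical
  obtain ⟨hφ1, hφ2, hφ3⟩ := hφ
  have hs : ∀ e : A, hd e ≠ s := no_arc_into_source tl hd hacyc hmin hsT
  have key : ∀ a b : A, a ≠ b → hd a = hd b → inDeg hd (hd a) = 2 →
      slope (φ a) ≠ slope (φ b) := by
    intro a b hab hhd hdeg heq
    obtain ⟨k, hk0, hk⟩ := parallel_of_slope_eq (hφ1 b) (hφ1 a) heq.symm
    have hbmem : φ b ∈ Submodule.span F {φ a} := by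
      rw [hk]; exact Submodule.smul_mem _ _ (Submodule.mem_span_singleton_self _)
    have hdeg' : {c : A | hd c = hd a}.ncard = 2 := hdeg
    have hset : {c : A | hd c = hd a} = {a, b} := by
      obtain ⟨x, y, hxy, hxyset⟩ := Set.ncard_eq_two.mp hdeg'
      have hax : a ∈ ({x, y} : Set A) := by rw [← hxyset]; exact rfl
      have hbx : b ∈ ({x, y} : Set A) := by rw [← hxyset]; exact hhd.symm
      simp only [Set.mem_insert_iff, Set.mem_singleton_iff] at hax hbx
      rw [hxyset]
      rcases hax with rfl | rfl
      · rcases hbx with rfl | rfl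
        · exact absurd rfl hab
        · rfl
      · rcases hbx with rfl | rfl
        · exact Set.pair_comm b a
        · exact absurd rfl hab
    by_cases hvT : hd a ∈ T
    · have htop := hφ3 (hd a) hvT
      have hle : Submodule.span F (φ '' {c | hd c = hd a}) ≤ Submodule.span F {φ a} := by
        rw [hset, Set.image_insert_eq, Set.image_singleton, Submodule.span_le]
        rintro z hz
        simp only [Set.mem_insert_iff, Set.mem_singleton_iff] at hz
        rcases hz with rfl | rfl
        · exact Submodule.mem_span_singleton_self _
        · exact hbmem
      rw [htop] at hle
      exact span_pair_ne_top (φ a) (top_le_iff.mp hle)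
    · obtain ⟨t, htT, hlt⟩ := hmin.2 b
      have htv : t ≠ hd a := fun h => hvT (h ▸ htT)
      have hst : s ≠ t := fun h => hsT (h ▸ htT)
      have hacyc' := acyclic_restrict tl hd (b0 := b) hacyc
      have hs' : ∀ e : {c : A // c ≠ b}, hd e.1 ≠ s := fun e => hs e.1
      have himg : ∀ w : V, w ≠ hd a →
          (fun c : {c : A // c ≠ b} => φ c.1) '' {d : {c : A // c ≠ b} | hd d.1 = w}
            = φ '' {d : A | hd d = w} := by
        intro w hw
        ext z
        constructor
        · rintro ⟨⟨c, hcb⟩, hc, rfl⟩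
          exact ⟨c, hc, rfl⟩
        · rintro ⟨c, hc, rfl⟩
          have hcb : c ≠ b := by
            intro hv
            rw [hv] at hc
            exact hw (hc.symm.trans hhd.symm)
          exact ⟨⟨c, hcb⟩, hc, rfl⟩
      have hφ2' : ∀ c : {c : A // c ≠ b}, tl c.1 ≠ s →
          φ c.1 ∈ Submodule.span F
            ((fun d : {d : A // d ≠ b} => φ d.1) '' {d : {d : A // d ≠ b} | hd d.1 = tl c.1}) := by
        intro c hcs
        by_cases hcv : tl c.1 = hd a
        · have h1 := hφ2 c.1 hcs
          rw [hcv, hset, Set.image_insert_eq, Set.image_singleton] at h1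
          have hle1 : Submodule.span F {φ a, φ b} ≤ Submodule.span F {φ a} := by
            rw [Submodule.span_le]
            rintro z hz
            simp only [Set.mem_insert_iff, Set.mem_singleton_iff] at hz
            rcases hz with rfl | rfl
            · exact Submodule.mem_span_singleton_self _
            · exact hbmem
          have h2 := hle1 h1
          have hamem : φ a ∈ (fun d : {d : A // d ≠ b} => φ d.1) ''
              {d : {d : A // d ≠ b} | hd d.1 = tl c.1} :=
            ⟨⟨a, hab⟩, hcv.symm, rfl⟩
          exact Submodule.span_mono (Set.singleton_subset_iff.mpr hamem) h2
        · rw [himg (tl c.1) hcv]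
          exact hφ2 c.1 hcs
      have hφ3t : Submodule.span F
          ((fun d : {d : A // d ≠ b} => φ d.1) '' {d : {d : A // d ≠ b} | hd d.1 = t}) = ⊤ := by
        rw [himg t htv]
        exact hφ3 t htT
      obtain ⟨fA, hf, gA, hg, hind⟩ := exists_indep_pair hφ3t
      obtain ⟨Pf, Pg, w1, w2, hdisj⟩ :=
        build_disjoint_walks (fun c : {c : A // c ≠ b} => tl c.1) (fun c => hd c.1) hacyc'
          hs' _ (fun c => hφ1 c.1) hφ2' _ fA gA le_rfl hind
      have hQf : IsArcWalk (fun c : {c : A // c ≠ b} => tl c.1) (fun c => hd c.1) s t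
          (Pf ++ [fA]) := isArcWalk_append _ _ w1 ⟨rfl, hf⟩
      have hQg : IsArcWalk (fun c : {c : A // c ≠ b} => tl c.1) (fun c => hd c.1) s t
          (Pg ++ [gA]) := isArcWalk_append _ _ w2 ⟨rfl, hg⟩
      have h2le := two_le_lam (fun c : {c : A // c ≠ b} => tl c.1) (fun c => hd c.1)
        hst _ _ hQf hQg hdisj
      exact absurd hlt (Nat.not_lt.mpr h2le)
  have hrespect : ∀ a b : A, SubtreeRel tl hd a b → slope (φ a) = slope (φ b) := by
    rintro a b ⟨h1, h2⟩
    have hbs : tl b ≠ s := fun h => hs a (h1.trans h)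
    have h2' : {c : A | hd c = hd a}.ncard = 1 := h2
    rw [h1] at h2'
    have hset1 : {c : A | hd c = tl b} = {a} := by
      obtain ⟨x, hx⟩ := Set.ncard_eq_one.mp h2'
      have hax : a ∈ ({x} : Set A) := by rw [← hx]; exact h1
      rw [Set.mem_singleton_iff] at hax
      rw [hx, hax]
    have hmem := hφ2 b hbs
    rw [hset1, Set.image_singleton] at hmem
    obtain ⟨k, hk⟩ := Submodule.mem_span_singleton.mp hmem
    have hk0 : k ≠ 0 := fun h => hφ1 b (by rw [← hk, h, zero_smul])
    rw [← hk]
    exact (slope_smul hk0 _).symm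
  have C : (subtreeGraph tl hd).Coloring (Option F) :=
    SimpleGraph.Coloring.mk (Quot.lift (fun a => slope (φ a)) hrespect) (by
      rintro x y ⟨hxy, a, b, rfl, rfl, hhd, hdeg⟩
      exact key a b (fun h => hxy (by rw [h])) hhd hdeg)
  have hco := C.colorable
  rwa [Fintype.card_option, hF] at hco

end NCMinor
end

section
/- Fix a prime power q ≥ 2. Suppose that every 2-minimal acyclic multicast network whose underlying topology is K_{q+2}-minor-free admits a rate-2 linear coding solution over the finite field F_q. Then every finite simple graph with chromatic number q + 2 contains K_{q+1} as a minor. (That is, the NC-Minor Conjecture for q implies the Weak Hadwiger Conjecture for q + 2.) -/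
namespace NCMinor

section AuxWalk

variable {V A : Type} {tl hd : A → V}

lemma auxRankLe (ρ : V → ℕ) (hρ : ∀ a, ρ (tl a) < ρ (hd a)) :
    ∀ (p : List A) (u v : V), IsArcWalk tl hd u v p → ρ u ≤ ρ v := by
  intro p
  induction p with
  | nil => intro u v h; exact le_of_eq (congrArg ρ h)
  | cons a p ih =>
    rintro u v ⟨h1, h2⟩
    subst h1
    have := ih (hd a) v h2
    have := hρ a
    omega

lemma auxAcyclicOfRank (ρ : V → ℕ) (hρ : ∀ a, ρ (tl a) < ρ (hd a)) :
    Acyclic tl hd := by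
  intro v p hp
  cases p with
  | nil => rfl
  | cons a p =>
    obtain ⟨h1, h2⟩ := hp
    exfalso
    subst h1
    have h3 := auxRankLe ρ hρ p (hd _) _ h2
    have := hρ a
    omega

lemma auxExistsLast : ∀ (p : List A) (u v : V), IsArcWalk tl hd u v p → p ≠ [] →
    ∃ a ∈ p, hd a = v := by
  intro p
  induction p with
  | nil => intro u v _ hne; exact absurd rfl hne
  | cons a p ih =>
    rintro u v ⟨h1, h2⟩ _
    cases p with
    | nil => exact ⟨a, List.mem_cons_self, h2⟩
    | cons b p' =>
      obtain ⟨c, hc, hcv⟩ := ih (hd a) v h2 (by simp)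
      exact ⟨c, List.mem_cons_of_mem a hc, hcv⟩

lemma auxExistsPred : ∀ (p : List A) (u v : V), IsArcWalk tl hd u v p →
    ∀ e ∈ p, tl e ≠ u → ∃ a ∈ p, hd a = tl e := by
  intro p
  induction p with
  | nil => intro u v _ e he; exact absurd he List.not_mem_nil
  | cons a p ih =>
    rintro u v ⟨h1, h2⟩ e he hne
    rcases List.mem_cons.mp he with rfl | he'
    · exact absurd h1 hne
    · by_cases hta : tl e = hd a
      · exact ⟨a, List.mem_cons_self, hta.symm⟩
      · obtain ⟨c, hc, hcv⟩ := ih (hd a) v h2 e he' hta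
        exact ⟨c, List.mem_cons_of_mem a hc, hcv⟩

lemma auxLamBdd [Fintype A] (s v : V) (hsv : s ≠ v) :
    ∀ k ∈ {k | ∃ P : Fin k → List A,
      (∀ i, IsArcWalk tl hd s v (P i)) ∧
      ∀ i j : Fin k, i ≠ j → ∀ a, a ∈ P i → a ∉ P j}, k ≤ Fintype.card A := by
  rintro k ⟨P, hw, hdisj⟩
  have hne : ∀ i, P i ≠ [] := by
    intro i hnil
    have := hw i
    rw [hnil] at this
    exact hsv this
  have hinj : Function.Injective (fun i => (P i).head (hne i)) := by
    intro i j hij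
    by_contra hne'
    have hm : (P i).head (hne i) ∈ P j := by
      rw [show (P i).head (hne i) = (P j).head (hne j) from hij]
      exact List.head_mem (hne j)
    exact hdisj i j hne' _ (List.head_mem (hne i)) hm
  simpa using Fintype.card_le_of_injective _ hinj

lemma auxTwoLeLam [Fintype A] (s v : V) (hsv : s ≠ v) (P : Fin 2 → List A)
    (hw : ∀ i, IsArcWalk tl hd s v (P i))
    (hdisj : ∀ i j : Fin 2, i ≠ j → ∀ a, a ∈ P i → a ∉ P j) :
    2 ≤ lam tl hd s v := by
  apply le_csSup ⟨Fintype.card A, fun k hk => auxLamBdd s v hsv k hk⟩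
  exact ⟨P, hw, hdisj⟩

lemma auxLamLtTwo (s v : V)
    (hshare : ∀ p₀ p₁ : List A, IsArcWalk tl hd s v p₀ → IsArcWalk tl hd s v p₁ →
      ∃ a, a ∈ p₀ ∧ a ∈ p₁) :
    lam tl hd s v < 2 := by
  have h1 : lam tl hd s v ≤ 1 := by
    apply csSup_le
    · exact ⟨0, Fin.elim0, fun i => i.elim0, fun i => i.elim0⟩
    · rintro k ⟨P, hw, hdisj⟩
      by_contra hk
      push_neg at hk
      have h0 : (0 : ℕ) < k := by omega
      have h1' : (1 : ℕ) < k := by omega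
      obtain ⟨a, ha0, ha1⟩ := hshare (P ⟨0, h0⟩) (P ⟨1, h1'⟩) (hw _) (hw _)
      exact hdisj ⟨0, h0⟩ ⟨1, h1'⟩ (by simp [Fin.ext_iff]) a ha0 ha1
  omega

end AuxWalk

section AuxNet

variable {W : Type} (H : SimpleGraph W)

/-- arcs of type "edge", indexed by ordered adjacent pairs. -/
abbrev NetE := {p : W × W // H.Adj p.1 p.2}

/-- non-isolated vertices. -/
abbrev NetNI := {v : W // ∃ u, H.Adj v u}

/-- nodes of the network: source `none`, vertex nodes `some (inl w)`,
edge (receiver) nodes `some (inr e)`. -/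
abbrev NetV := Option (W ⊕ NetE H)

/-- arcs of the network. -/
abbrev NetA := NetNI H ⊕ (NetE H ⊕ NetE H)

def ntl : NetA H → NetV H
  | .inl _ => none
  | .inr (.inl e) => some (.inl e.1.1)
  | .inr (.inr e) => some (.inl e.1.2)

def nhd : NetA H → NetV H
  | .inl v => some (.inl v.1)
  | .inr (.inl e) => some (.inr e)
  | .inr (.inr e) => some (.inr e)

def nrk : NetV H → ℕ
  | none => 0
  | some (.inl _) => 1
  | some (.inr _) => 2

variable {H}

lemma nrk_lt : ∀ a : NetA H, nrk H (ntl H a) < nrk H (nhd H a) := by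
  rintro (v | e | e) <;> simp [ntl, nhd, nrk]

lemma nhd_eq_x {b : NetA H} {v : W} (h : nhd H b = some (.inl v)) :
    ∃ hv : ∃ u, H.Adj v u, b = Sum.inl ⟨v, hv⟩ := by
  rcases b with u | e | e
  · simp only [nhd, Option.some.injEq, Sum.inl.injEq] at h
    exact ⟨h ▸ u.2, congrArg Sum.inl (Subtype.ext h)⟩
  · simp [nhd] at h
  · simp [nhd] at h

lemma nhd_eq_r {b : NetA H} {e : NetE H} (h : nhd H b = some (.inr e)) :
    b = Sum.inr (.inl e) ∨ b = Sum.inr (.inr e) := by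
  rcases b with u | e' | e' <;> simp only [nhd, Option.some.injEq, Sum.inr.injEq,
    reduceCtorEq] at h
  · exact Or.inl (by rw [h])
  · exact Or.inr (by rw [h])

/-- characterization of adjacency in the topology of the network. -/
lemma net_adj_cases {u v : NetV H}
    (h : (topology (ntl H) (nhd H)).Adj u v) :
    (∃ w : W, (u = none ∧ v = some (.inl w)) ∨ (v = none ∧ u = some (.inl w))) ∨
    (∃ e : NetE H, ∃ w : W, (w = e.1.1 ∨ w = e.1.2) ∧
      ((u = some (.inl w) ∧ v = some (.inr e)) ∨
       (v = some (.inl w) ∧ u = some (.inr e)))) := by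
  obtain ⟨hne, a, hc⟩ := h
  rcases a with nv | e | e
  · rcases hc with ⟨h1, h2⟩ | ⟨h1, h2⟩
    · exact Or.inl ⟨nv.1, Or.inl ⟨h1.symm, h2.symm⟩⟩
    · exact Or.inl ⟨nv.1, Or.inr ⟨h1.symm, h2.symm⟩⟩
  · rcases hc with ⟨h1, h2⟩ | ⟨h1, h2⟩
    · exact Or.inr ⟨e, e.1.1, Or.inl rfl, Or.inl ⟨h1.symm, h2.symm⟩⟩
    · exact Or.inr ⟨e, e.1.1, Or.inl rfl, Or.inr ⟨h1.symm, h2.symm⟩⟩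
  · rcases hc with ⟨h1, h2⟩ | ⟨h1, h2⟩
    · exact Or.inr ⟨e, e.1.2, Or.inr rfl, Or.inl ⟨h1.symm, h2.symm⟩⟩
    · exact Or.inr ⟨e, e.1.2, Or.inr rfl, Or.inr ⟨h1.symm, h2.symm⟩⟩

lemma net_ends_adj {e : NetE H} {w z : W} (hw : w = e.1.1 ∨ w = e.1.2)
    (hz : z = e.1.1 ∨ z = e.1.2) (hne : w ≠ z) : H.Adj w z := by
  rcases hw with rfl | rfl <;> rcases hz with rfl | rfl
  · exact absurd rfl hne
  · exact e.2
  · exact e.2.symm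
  · exact absurd rfl hne

/-- projecting a walk in an induced subgraph of the topology down to `H`. -/
lemma net_walk_project {B : Set (NetV H)} (hB : none ∉ B)
    {a b : ↥B} (p : ((topology (ntl H) (nhd H)).induce B).Walk a b) :
    ∀ (w w' : W) (hw : (some (Sum.inl w) : NetV H) ∈ B)
      (hw' : (some (Sum.inl w') : NetV H) ∈ B),
      (b : NetV H) = some (.inl w') →
      ((a : NetV H) = some (.inl w) ∨
        ∃ e : NetE H, (a : NetV H) = some (.inr e) ∧ (w = e.1.1 ∨ w = e.1.2)) →
      (H.induce {x : W | (some (Sum.inl x) : NetV H) ∈ B}).Reachable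
        ⟨w, show w ∈ {x : W | (some (Sum.inl x) : NetV H) ∈ B} from hw⟩
        ⟨w', show w' ∈ {x : W | (some (Sum.inl x) : NetV H) ∈ B} from hw'⟩ := by
  induction p with
  | nil =>
    rename_i a
    intro w w' hw hw' hb ha
    rcases ha with ha | ⟨e, ha, _⟩
    · have : w = w' := by
        rw [ha] at hb
        simpa using hb
      subst this
      rfl
    · rw [ha] at hb; simp at hb
  | @cons a c b h q ih =>
    intro w w' hw hw' hb ha
    have hadj : (topology (ntl H) (nhd H)).Adj (a : NetV H) (c : NetV H) := by
      simpa using h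
    rcases ha with ha | ⟨e, ha, hee⟩
    · -- `a` is the vertex node of `w`; the next node must be an edge node through `w`
      rcases net_adj_cases hadj with ⟨w1, ⟨h1, _⟩ | ⟨h1, _⟩⟩ | ⟨e, w1, hw1, hcase⟩
      · rw [ha] at h1; simp at h1
      · exact absurd (h1 ▸ c.2) hB
      · rcases hcase with ⟨h1, h2⟩ | ⟨h1, h2⟩
        · have hwweq : w = w1 := by
            rw [ha] at h1; simpa using h1
          exact ih w w' hw hw' hb (Or.inr ⟨e, h2, hwweq ▸ hw1⟩)
        · rw [ha] at h2; simp at h2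
    · -- `a` is an edge node of `e`; the next node is a vertex node of an end of `e`
      rcases net_adj_cases hadj with ⟨w1, ⟨h1, _⟩ | ⟨h1, _⟩⟩ | ⟨e', w1, hw1, hcase⟩
      · rw [ha] at h1; simp at h1
      · exact absurd (h1 ▸ c.2) hB
      · rcases hcase with ⟨h1, h2⟩ | ⟨h1, h2⟩
        · rw [ha] at h1; simp at h1
        · have he' : e' = e := by
            rw [ha] at h2
            simpa using h2.symm
          subst he'
          have hw1B : some (Sum.inl w1) ∈ B := h1 ▸ c.2
          by_cases hww1 : w = w1
          · exact ih w w' hw hw' hb (Or.inl (hww1 ▸ h1))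
          · have hstep : (H.induce {x : W | (some (Sum.inl x) : NetV H) ∈ B}).Adj
                ⟨w, show w ∈ {x : W | (some (Sum.inl x) : NetV H) ∈ B} from hw⟩
                ⟨w1, show w1 ∈ {x : W | (some (Sum.inl x) : NetV H) ∈ B} from hw1B⟩ := by
              simpa using net_ends_adj hee hw1 hww1
            exact hstep.reachable.trans (ih w1 w' hw1B hw' hb (Or.inl h1))

/-- if an edge node lies in a connected branch set that also contains a vertex node,
then some end of that edge has its vertex node in the branch set. -/
lemma net_r_step {B : Set (NetV H)}
    (hconn : ((topology (ntl H) (nhd H)).induce B).Connected) (hB : none ∉ B)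
    {z0 : W} (hz0 : some (.inl z0) ∈ B) {e : NetE H} (he : some (.inr e) ∈ B) :
    ∃ z, some (.inl z) ∈ B ∧ (z = e.1.1 ∨ z = e.1.2) := by
  obtain ⟨p⟩ := hconn.preconnected ⟨some (.inr e), he⟩ ⟨some (.inl z0), hz0⟩
  have hne : (⟨some (.inr e), he⟩ : ↥B) ≠ ⟨some (.inl z0), hz0⟩ := by
    simp [Subtype.ext_iff]
  have hnil := SimpleGraph.Walk.not_nil_of_ne (p := p) hne
  have hstep := p.adj_snd hnil
  have hadj : (topology (ntl H) (nhd H)).Adj (some (.inr e)) ((p.getVert 1) : NetV H) := by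
    simpa using hstep
  rcases net_adj_cases hadj with ⟨w1, ⟨h1, _⟩ | ⟨h1, _⟩⟩ | ⟨e', w1, hw1, hcase⟩
  · simp at h1
  · exact absurd (h1 ▸ (p.getVert 1).2) hB
  · rcases hcase with ⟨h1, _⟩ | ⟨h1, h2⟩
    · simp at h1
    · have he' : e' = e := by simpa using h2.symm
      subst he'
      exact ⟨w1, h1 ▸ (p.getVert 1).2, hw1⟩

lemma net_source_ne {t : W ⊕ NetE H} : (none : NetV H) ≠ some t := by simp

/-- the network is 2-minimal. -/
lemma netTwoMinimal [Fintype W] :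
    TwoMinimal (ntl H) (nhd H) none
      (Set.range fun e : NetE H => (some (Sum.inr e) : NetV H)) := by
  classical
  haveI : Fintype (NetE H) := Fintype.ofFinite _
  haveI : Fintype (NetNI H) := Fintype.ofFinite _
  haveI : Fintype (NetA H) := Fintype.ofFinite _
  constructor
  · rintro t ⟨e, rfl⟩
    have hne : e.1.1 ≠ e.1.2 := e.2.ne
    apply auxTwoLeLam (P := ![[Sum.inl ⟨e.1.1, ⟨e.1.2, e.2⟩⟩, Sum.inr (Sum.inl e)],
              [Sum.inl ⟨e.1.2, ⟨e.1.1, e.2.symm⟩⟩, Sum.inr (Sum.inr e)]])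
      none _ (by simp)
    · intro i
      fin_cases i
      · exact ⟨rfl, rfl, rfl⟩
      · exact ⟨rfl, rfl, rfl⟩
    · intro i j hij a hai haj
      fin_cases i <;> fin_cases j <;> simp_all [Subtype.ext_iff] <;>
        rcases hai with rfl | rfl <;> simp_all [Subtype.ext_iff]
  · intro a
    rcases a with u | e | e
    · -- delete the source arc into the vertex node of `u`
      obtain ⟨z, hz⟩ := u.2
      refine ⟨some (Sum.inr ⟨(u.1, z), hz⟩), ⟨⟨(u.1, z), hz⟩, rfl⟩, ?_⟩
      apply auxLamLtTwo
      intro p₀ p₁ h₀ h₁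
      have key : ∀ p, IsArcWalk (fun b : {b : NetA H // b ≠ Sum.inl u} => ntl H b.1)
          (fun b => nhd H b.1) none (some (Sum.inr ⟨(u.1, z), hz⟩)) p →
          (⟨Sum.inr (Sum.inr ⟨(u.1, z), hz⟩), by simp⟩ :
            {b : NetA H // b ≠ Sum.inl u}) ∈ p := by
        intro p hp
        have hnil : p ≠ [] := by
          intro h; subst h; simp [IsArcWalk] at hp
        obtain ⟨b', hb', hhd⟩ := auxExistsLast p _ _ hp hnil
        rcases nhd_eq_r hhd with h | h
        · -- the last arc comes from the vertex node of `u`, which has no in-arc left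
          exfalso
          have htl : ntl H b'.1 = some (Sum.inl u.1) := by rw [h]; rfl
          obtain ⟨c', hc', hch⟩ := auxExistsPred p _ _ hp b' hb'
            (by rw [htl]; exact fun hc => by simp at hc)
          rw [htl] at hch
          obtain ⟨hv', hc'eq⟩ := nhd_eq_x hch
          have : c'.1 = Sum.inl u := by rw [hc'eq]
          exact c'.2 this
        · have : b' = ⟨Sum.inr (Sum.inr ⟨(u.1, z), hz⟩), by simp⟩ := Subtype.ext h
          rwa [this] at hb'
      exact ⟨_, key p₀ h₀, key p₁ h₁⟩
    · -- delete the first in-arc of the receiver of `e`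
      refine ⟨some (Sum.inr e), ⟨e, rfl⟩, ?_⟩
      apply auxLamLtTwo
      intro p₀ p₁ h₀ h₁
      have key : ∀ p, IsArcWalk (fun b : {b : NetA H // b ≠ Sum.inr (Sum.inl e)} => ntl H b.1)
          (fun b => nhd H b.1) none (some (Sum.inr e)) p →
          (⟨Sum.inr (Sum.inr e), by simp⟩ :
            {b : NetA H // b ≠ Sum.inr (Sum.inl e)}) ∈ p := by
        intro p hp
        have hnil : p ≠ [] := by
          intro h; subst h; simp [IsArcWalk] at hp
        obtain ⟨b', hb', hhd⟩ := auxExistsLast p _ _ hp hnil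
        rcases nhd_eq_r hhd with h | h
        · exact absurd h b'.2
        · have : b' = ⟨Sum.inr (Sum.inr e), by simp⟩ := Subtype.ext h
          rwa [this] at hb'
      exact ⟨_, key p₀ h₀, key p₁ h₁⟩
    · -- delete the second in-arc of the receiver of `e`
      refine ⟨some (Sum.inr e), ⟨e, rfl⟩, ?_⟩
      apply auxLamLtTwo
      intro p₀ p₁ h₀ h₁
      have key : ∀ p, IsArcWalk (fun b : {b : NetA H // b ≠ Sum.inr (Sum.inr e)} => ntl H b.1)
          (fun b => nhd H b.1) none (some (Sum.inr e)) p →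
          (⟨Sum.inr (Sum.inl e), by simp⟩ :
            {b : NetA H // b ≠ Sum.inr (Sum.inr e)}) ∈ p := by
        intro p hp
        have hnil : p ≠ [] := by
          intro h; subst h; simp [IsArcWalk] at hp
        obtain ⟨b', hb', hhd⟩ := auxExistsLast p _ _ hp hnil
        rcases nhd_eq_r hhd with h | h
        · have : b' = ⟨Sum.inr (Sum.inl e), by simp⟩ := Subtype.ext h
          rwa [this] at hb'
        · exact absurd h b'.2
      exact ⟨_, key p₀ h₀, key p₁ h₁⟩

/-- a `K_{q+2}` minor in the topology of the network yields a `K_{q+1}` minor in `H`. -/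
lemma netMinorTransfer (q : ℕ) (hq : 2 ≤ q)
    (hM : IsMinor (⊤ : SimpleGraph (Fin (q + 2))) (topology (ntl H) (nhd H))) :
    IsMinor (⊤ : SimpleGraph (Fin (q + 1))) H := by
  classical
  obtain ⟨B, hconn, hdisj, hadj⟩ := hM
  -- the (unique) index of the branch set containing the source, if any
  set i₀ : Fin (q + 2) := if h : ∃ i, (none : NetV H) ∈ B i then h.choose
    else ⟨0, by omega⟩ with hi₀
  have hnone : ∀ i, i ≠ i₀ → (none : NetV H) ∉ B i := by
    intro i hi hin
    by_cases h : ∃ j, (none : NetV H) ∈ B j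
    · have h0 : (none : NetV H) ∈ B i₀ := by
        rw [hi₀, dif_pos h]; exact h.choose_spec
      exact Set.disjoint_left.mp (hdisj hi) hin h0
    · exact h ⟨i, hin⟩
  -- every branch set other than `i₀`'s contains a vertex node
  have hx : ∀ i, i ≠ i₀ → ∃ w, (some (Sum.inl w) : NetV H) ∈ B i := by
    intro i hi
    obtain ⟨⟨x, hxB⟩⟩ := (hconn i).nonempty
    rcases x with _ | w | e
    · exact absurd hxB (hnone i hi)
    · exact ⟨w, hxB⟩
    · -- if `B i` were contained in `{r_e}`, pigeonhole on the two ends of `e`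
      by_contra hno
      push_neg at hno
      have claim : ∀ y, y ∈ B i → y = some (Sum.inr e) := by
        intro y hy
        by_contra hney
        obtain ⟨p⟩ := (hconn i).preconnected ⟨some (Sum.inr e), hxB⟩ ⟨y, hy⟩
        have hnep : (⟨some (Sum.inr e), hxB⟩ : ↥(B i)) ≠ ⟨y, hy⟩ :=
          fun h => hney ((congrArg Subtype.val h).symm)
        have hnil := SimpleGraph.Walk.not_nil_of_ne (p := p) hnep
        have hadj1 : (topology (ntl H) (nhd H)).Adj (some (Sum.inr e))
            ((p.getVert 1) : NetV H) := by simpa using p.adj_snd hnil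
        rcases net_adj_cases hadj1 with ⟨w1, ⟨h1, _⟩ | ⟨h1, _⟩⟩ |
          ⟨e', w1, hw1, ⟨h1, _⟩ | ⟨h1, _⟩⟩
        · simp at h1
        · exact absurd (h1 ▸ (p.getVert 1).2) (hnone i hi)
        · simp at h1
        · exact hno w1 (h1 ▸ (p.getVert 1).2)
      have hxx : ∀ k : Fin (q + 1), ∃ w1, some (Sum.inl w1) ∈ B (i.succAbove k) ∧
          (w1 = e.1.1 ∨ w1 = e.1.2) := by
        intro k
        obtain ⟨u', hu', v', hv', huv⟩ := hadj (i.succAbove k) i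
          (by simpa using Fin.succAbove_ne i k)
        have hv'e : v' = some (Sum.inr e) := claim v' hv'
        subst hv'e
        rcases net_adj_cases huv with ⟨w1, ⟨_, h2⟩ | ⟨h1, _⟩⟩ |
          ⟨e', w1, hw1, ⟨h1, h2⟩ | ⟨h1, _⟩⟩
        · simp at h2
        · simp at h1
        · have he' : e' = e := by simpa using h2.symm
          subst he'
          exact ⟨w1, h1 ▸ hu', hw1⟩
        · simp at h1
      have hdis : ∀ k l : Fin (q + 1), k ≠ l → ∀ w1,
          some (Sum.inl w1) ∈ B (i.succAbove k) →
          some (Sum.inl w1) ∈ B (i.succAbove l) → False := by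
        intro k l hkl w1 hk1 hl1
        exact Set.disjoint_left.mp
          (hdisj (fun h => hkl (Fin.succAbove_right_injective h))) hk1 hl1
      have h3 : (2 : ℕ) < q + 1 := by omega
      have h2' : (1 : ℕ) < q + 1 := by omega
      have h1' : (0 : ℕ) < q + 1 := by omega
      obtain ⟨w1, hB1, hw1⟩ := hxx ⟨0, h1'⟩
      obtain ⟨w2, hB2, hw2⟩ := hxx ⟨1, h2'⟩
      obtain ⟨w3, hB3, hw3⟩ := hxx ⟨2, h3⟩
      have h01 : (⟨0, h1'⟩ : Fin (q + 1)) ≠ ⟨1, h2'⟩ := by simp [Fin.ext_iff]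
      have h02 : (⟨0, h1'⟩ : Fin (q + 1)) ≠ ⟨2, h3⟩ := by simp [Fin.ext_iff]
      have h12 : (⟨1, h2'⟩ : Fin (q + 1)) ≠ ⟨2, h3⟩ := by simp [Fin.ext_iff]
      rcases hw1 with rfl | rfl <;> rcases hw2 with rfl | rfl <;>
        rcases hw3 with rfl | rfl <;>
        first
          | exact hdis _ _ h01 _ hB1 hB2
          | exact hdis _ _ h02 _ hB1 hB3
          | exact hdis _ _ h12 _ hB2 hB3
  -- build the branch sets in `H`
  refine ⟨fun k => {w : W | (some (Sum.inl w) : NetV H) ∈ B (i₀.succAbove k)},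
    ?_, ?_, ?_⟩
  · intro k
    have hik : i₀.succAbove k ≠ i₀ := Fin.succAbove_ne i₀ k
    obtain ⟨w0, hw0⟩ := hx _ hik
    haveI : Nonempty
        ↥{w : W | (some (Sum.inl w) : NetV H) ∈ B (i₀.succAbove k)} := ⟨⟨w0, hw0⟩⟩
    refine ⟨?_⟩
    rintro ⟨w, hw⟩ ⟨w', hw'⟩
    obtain ⟨p⟩ := (hconn _).preconnected ⟨some (Sum.inl w), hw⟩ ⟨some (Sum.inl w'), hw'⟩
    exact net_walk_project (hnone _ hik) p w w' hw hw' rfl (Or.inl rfl)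
  · intro k k' hkk'
    rw [Set.disjoint_left]
    intro w hw hw'
    exact Set.disjoint_left.mp
      (hdisj (fun h => hkk' (Fin.succAbove_right_injective h))) hw hw'
  · intro k k' hkk'
    have hne : i₀.succAbove k ≠ i₀.succAbove k' :=
      fun h => (by simpa using hkk' : k ≠ k') (Fin.succAbove_right_injective h)
    have hik : i₀.succAbove k ≠ i₀ := Fin.succAbove_ne i₀ k
    have hik' : i₀.succAbove k' ≠ i₀ := Fin.succAbove_ne i₀ k'
    obtain ⟨u', hu', v', hv', huv⟩ := hadj _ _ ((SimpleGraph.top_adj _ _).mpr hne)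
    rcases net_adj_cases huv with ⟨w1, ⟨h1, _⟩ | ⟨h1, _⟩⟩ |
      ⟨e, w1, hw1, ⟨h1, h2⟩ | ⟨h1, h2⟩⟩
    · exact absurd (h1 ▸ hu') (hnone _ hik)
    · exact absurd (h1 ▸ hv') (hnone _ hik')
    · -- u' is a vertex node in B (succAbove k), v' is an edge node in B (succAbove k')
      obtain ⟨z0, hz0⟩ := hx _ hik'
      obtain ⟨z, hzB, hz⟩ := net_r_step (hconn _) (hnone _ hik') hz0 (h2 ▸ hv')
      have hwz : w1 ≠ z := by
        intro hwz
        exact Set.disjoint_left.mp (hdisj hne) (h1 ▸ hu') (hwz ▸ hzB)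
      exact ⟨w1, show some (Sum.inl w1) ∈ B (i₀.succAbove k) from h1 ▸ hu',
        z, hzB, net_ends_adj hw1 hz hwz⟩
    · -- v' is a vertex node in B (succAbove k'), u' is an edge node in B (succAbove k)
      obtain ⟨z0, hz0⟩ := hx _ hik
      obtain ⟨z, hzB, hz⟩ := net_r_step (hconn _) (hnone _ hik) hz0 (h2 ▸ hu')
      have hwz : z ≠ w1 := by
        intro hwz
        exact Set.disjoint_left.mp (hdisj hne) (hwz ▸ hzB) (h1 ▸ hv')
      exact ⟨z, hzB, w1, show some (Sum.inl w1) ∈ B (i₀.succAbove k') from h1 ▸ hv',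
        net_ends_adj hz hw1 hwz⟩

end AuxNet

section AuxLin

variable {F : Type} [Field F]

lemma aux_span_det {x y u v : F × F} (hx : x ≠ 0)
    {k l : F} (hk : k • x = u) (hl : l • y = v)
    (hdet : x.1 * y.2 = x.2 * y.1)
    (hspan : Submodule.span F ({u, v} : Set (F × F)) = ⊤) : False := by
  have hker : ({u, v} : Set (F × F)) ⊆
      ↑(LinearMap.ker (x.2 • (LinearMap.fst F F F) - x.1 • (LinearMap.snd F F F))) := by
    rintro z (rfl | rfl)
    · rw [← hk]
      simp only [SetLike.mem_coe, LinearMap.mem_ker, LinearMap.sub_apply,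
        LinearMap.smul_apply, LinearMap.fst_apply, LinearMap.snd_apply,
        Prod.smul_fst, Prod.smul_snd, smul_eq_mul]
      ring
    · rw [← hl]
      simp only [SetLike.mem_coe, LinearMap.mem_ker, LinearMap.sub_apply,
        LinearMap.smul_apply, LinearMap.fst_apply, LinearMap.snd_apply,
        Prod.smul_fst, Prod.smul_snd, smul_eq_mul]
      linear_combination (-l) * hdet
  have htop : (⊤ : Submodule F (F × F)) ≤
      LinearMap.ker (x.2 • (LinearMap.fst F F F) - x.1 • (LinearMap.snd F F F)) := by
    rw [← hspan]
    exact Submodule.span_le.mpr hker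
  have h10 : (x.2 • (LinearMap.fst F F F) - x.1 • (LinearMap.snd F F F)) ((1 : F), (0 : F)) = 0 :=
    htop Submodule.mem_top
  have h01 : (x.2 • (LinearMap.fst F F F) - x.1 • (LinearMap.snd F F F)) ((0 : F), (1 : F)) = 0 :=
    htop Submodule.mem_top
  simp only [LinearMap.sub_apply, LinearMap.smul_apply, LinearMap.fst_apply,
    LinearMap.snd_apply, smul_eq_mul, mul_one, mul_zero, sub_zero, zero_sub,
    neg_eq_zero] at h10 h01
  exact hx (Prod.ext (by simpa using h01) (by simpa using h10))

open Classical in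
noncomputable def auxPsi (x : F × F) : Option F :=
  if x.2 = 0 then none else some (x.1 * x.2⁻¹)

lemma aux_psi_det {x y : F × F} (h : auxPsi x = auxPsi y) : x.1 * y.2 = x.2 * y.1 := by
  unfold auxPsi at h
  by_cases h1 : x.2 = 0
  · by_cases h2 : y.2 = 0
    · rw [h1, h2]; ring
    · rw [if_pos h1, if_neg h2] at h; exact absurd h (by simp)
  · by_cases h2 : y.2 = 0
    · rw [if_neg h1, if_pos h2] at h; exact absurd h (by simp)
    · rw [if_neg h1, if_neg h2] at h
      have h' := Option.some.inj h
      field_simp at h'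
      linear_combination h'

end AuxLin

/-- Theorem 2: the NC-Minor Conjecture for a prime power `q`
(realized by the finite field `F` with `q` elements) implies the Weak Hadwiger
Conjecture at `q + 2`. -/
theorem weakHadwiger_of_NCMinor
    (q : ℕ) (hq : 2 ≤ q) (F : Type) [Field F] [Fintype F] (hF : Fintype.card F = q)
    (hNC : ∀ (V A : Type) [Fintype V] [Fintype A] (tl hd : A → V) (s : V) (T : Set V),
      s ∉ T → Acyclic tl hd → TwoMinimal tl hd s T →
      ¬ IsMinor (⊤ : SimpleGraph (Fin (q + 2))) (topology tl hd) →
      ∃ φ : A → F × F, IsCodingSolution tl hd s T φ)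
    (W : Type) [Fintype W] (H : SimpleGraph W)
    (hchrom : H.chromaticNumber = ((q : ℕ∞) + 2)) :
    IsMinor (⊤ : SimpleGraph (Fin (q + 1))) H := by
  classical
  by_contra hK
  haveI : Fintype (NetE H) := Fintype.ofFinite _
  haveI : Fintype (NetNI H) := Fintype.ofFinite _
  haveI : Fintype (NetV H) := Fintype.ofFinite _
  haveI : Fintype (NetA H) := Fintype.ofFinite _
  obtain ⟨φ, hφ0, hφmid, hφrec⟩ := hNC (NetV H) (NetA H) (ntl H) (nhd H) none
    (Set.range fun e : NetE H => (some (Sum.inr e) : NetV H))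
    (by rintro ⟨e, he⟩; simp at he)
    (auxAcyclicOfRank (nrk H) nrk_lt)
    netTwoMinimal
    (fun hM => hK (netMinorTransfer q hq hM))
  -- compute the sets of in-arcs of vertex nodes and receiver nodes
  have hin_x : ∀ (v : W) (hv : ∃ z, H.Adj v z),
      {b : NetA H | nhd H b = some (Sum.inl v)} = {Sum.inl ⟨v, hv⟩} := by
    intro v hv
    ext b
    constructor
    · intro hb
      obtain ⟨hv', rfl⟩ := nhd_eq_x hb
      rfl
    · rintro rfl
      rfl
  have hin_r : ∀ e : NetE H, {b : NetA H | nhd H b = some (Sum.inr e)} =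
      {Sum.inr (Sum.inl e), Sum.inr (Sum.inr e)} := by
    intro e
    ext b
    constructor
    · intro hb
      rcases nhd_eq_r hb with rfl | rfl
      · exact Set.mem_insert _ _
      · exact Set.mem_insert_of_mem _ rfl
    · rintro (rfl | rfl) <;> rfl
  -- adjacent vertices are forced to carry independent lines
  have key : ∀ (u v : W) (h : H.Adj u v) (h1 : ∃ z, H.Adj u z) (h2 : ∃ z, H.Adj v z),
      auxPsi (φ (Sum.inl ⟨u, h1⟩)) ≠ auxPsi (φ (Sum.inl ⟨v, h2⟩)) := by
    intro u v h h1 h2 heq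
    have hb : φ (Sum.inr (Sum.inl (⟨(u, v), h⟩ : NetE H))) ∈ Submodule.span F
        (φ '' {b | nhd H b = ntl H (Sum.inr (Sum.inl (⟨(u, v), h⟩ : NetE H)))}) :=
      hφmid _ (fun hc => by simp [ntl] at hc)
    rw [show ntl H (Sum.inr (Sum.inl (⟨(u, v), h⟩ : NetE H))) = some (Sum.inl u)
      from rfl, hin_x u h1, Set.image_singleton] at hb
    obtain ⟨k, hk⟩ := Submodule.mem_span_singleton.mp hb
    have hc : φ (Sum.inr (Sum.inr (⟨(u, v), h⟩ : NetE H))) ∈ Submodule.span F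
        (φ '' {b | nhd H b = ntl H (Sum.inr (Sum.inr (⟨(u, v), h⟩ : NetE H)))}) :=
      hφmid _ (fun hc => by simp [ntl] at hc)
    rw [show ntl H (Sum.inr (Sum.inr (⟨(u, v), h⟩ : NetE H))) = some (Sum.inl v)
      from rfl, hin_x v h2, Set.image_singleton] at hc
    obtain ⟨l, hl⟩ := Submodule.mem_span_singleton.mp hc
    have hspan := hφrec (some (Sum.inr (⟨(u, v), h⟩ : NetE H))) ⟨⟨(u, v), h⟩, rfl⟩
    rw [hin_r, Set.image_pair] at hspan
    exact aux_span_det (hφ0 (Sum.inl ⟨u, h1⟩)) hk hl (aux_psi_det heq) hspan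
  -- produce a proper coloring of `H` with `q + 1` colors
  have hcol : ∀ {a b : W}, H.Adj a b →
      (fun w => if h : ∃ z, H.Adj w z then auxPsi (φ (Sum.inl ⟨w, h⟩)) else none) a ≠
      (fun w => if h : ∃ z, H.Adj w z then auxPsi (φ (Sum.inl ⟨w, h⟩)) else none) b := by
    intro a b hab
    have ha : ∃ z, H.Adj a z := ⟨b, hab⟩
    have hb : ∃ z, H.Adj b z := ⟨a, hab.symm⟩
    simp only [dif_pos ha, dif_pos hb]
    exact key a b hab ha hb
  have hcolorable : H.Colorable (q + 1) := by
    have := (SimpleGraph.Coloring.mk _ hcol).colorable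
    rwa [Fintype.card_option, hF] at this
  have hle : H.chromaticNumber ≤ (q + 1 : ℕ) :=
    SimpleGraph.chromaticNumber_le_iff_colorable.mpr hcolorable
  rw [hchrom] at hle
  have hle' : ((q + 2 : ℕ) : ℕ∞) ≤ ((q + 1 : ℕ) : ℕ∞) := by
    refine le_trans (le_of_eq ?_) hle
    push_cast
    rfl
  have := Nat.cast_le.mp hle'
  omega

end NCMinor
end
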